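/- Under the hypotheses of the previous setting, assume uniform constants: θ_m ≤ θ, ρ_m ≤ ρ, and σ_{m,n} ≤ σ_n for all blocks m ∈ {1, …, M} and participants n ∈ {1, …, N}, with θ, ρ > 0, and set γ = (1+θ)(1+ρ) (so γ > 1). Then with M = HT the FedAttn output X^T and centralized output X^* satisfy ‖X^T − X^*‖_F ≤ [(1+θ)·Σ_{n=1}^{N} σ_n] · [(γ^M − 1)/(γ − 1)] · [1 − (γ − 1)/(γ^H − 1)]. (Corollary 1 of the paper.) -/

import Mathlib

/-!
Statement 3 (Corollary 1 of the paper): under uniform Lipschitz constants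
`θ m ≤ θ0`, `ρ m ≤ ρ0` and uniformly bounded deviations `σ m n ≤ σbar n`,
with `γ = (1+θ0)(1+ρ0)` and `M = H*T`, the FedAttn output `Xfed (H*T)` and the
centralized output `Xcen (H*T)` satisfy
`‖Xfed − Xcen‖_F ≤ ((1+θ0)·Σ_n σbar n)·((γ^M − 1)/(γ − 1))·(1 − (γ − 1)/(γ^H − 1))`.
-/

attribute [local instance] Matrix.frobeniusNormedAddCommGroup

/-- Auxiliary: geometric sum over `Icc 1 M` with reversed exponents. -/
theorem fedattn_aux_geomIcc (x : ℝ) (hx : x ≠ 1) (M : ℕ) :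
    ∑ k ∈ Finset.Icc 1 M, x ^ (M - k) = (x ^ M - 1) / (x - 1) := by
  rw [← geom_sum_eq hx]
  refine Finset.sum_nbij' (fun k => M - k) (fun i => M - i) ?_ ?_ ?_ ?_ ?_
  · intro a ha; simp at ha ⊢; omega
  · intro a ha; simp at ha ⊢; omega
  · intro a ha; simp at ha ⊢; omega
  · intro a ha; simp at ha ⊢; omega
  · intro a ha; rfl

/-- Auxiliary: sum over multiples of `H` in `Icc 1 (H*T)`, reindexed. -/
theorem fedattn_aux_multIcc (x : ℝ) (H T : ℕ) (hH : 1 ≤ H) :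
    ∑ k ∈ (Finset.Icc 1 (H * T)).filter (fun k => H ∣ k), x ^ (H * T - k)
      = ∑ j ∈ Finset.Icc 1 T, (x ^ H) ^ (T - j) := by
  refine (Finset.sum_nbij' (fun j => H * j) (fun k => k / H) ?_ ?_ ?_ ?_ ?_).symm
  · intro j hj
    simp only [Finset.mem_Icc, Finset.mem_filter] at hj ⊢
    exact ⟨⟨by nlinarith, Nat.mul_le_mul_left H hj.2⟩, ⟨j, rfl⟩⟩
  · intro k hk
    simp only [Finset.mem_Icc, Finset.mem_filter] at hk ⊢
    obtain ⟨⟨h1, h2⟩, c, rfl⟩ := hk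
    rw [Nat.mul_div_cancel_left c (by omega)]
    constructor
    · rcases Nat.eq_zero_or_pos c with rfl | hc; · omega
      · exact hc
    · exact Nat.le_of_mul_le_mul_left h2 (by omega)
  · intro j hj; exact Nat.mul_div_cancel_left j (by omega)
  · intro k hk
    simp only [Finset.mem_Icc, Finset.mem_filter] at hk
    exact Nat.mul_div_cancel' hk.2
  · intro j hj
    rw [← pow_mul]
    congr 1
    simpa using Nat.mul_sub H T j

/-- Auxiliary: recurrence for the filtered geometric sum. -/
theorem fedattn_aux_Srec (γ : ℝ) (H m : ℕ) :
    ∑ k ∈ (Finset.Icc 1 (m + 1)).filter (fun k => ¬ H ∣ k), γ ^ (m + 1 - k)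
      = γ * ∑ k ∈ (Finset.Icc 1 m).filter (fun k => ¬ H ∣ k), γ ^ (m - k)
        + (if H ∣ (m + 1) then 0 else 1) := by
  have hins : Finset.Icc 1 (m + 1) = insert (m + 1) (Finset.Icc 1 m) := by
    ext k; simp [Finset.mem_Icc, Finset.mem_insert]; omega
  rw [hins, Finset.filter_insert]
  have hsum : ∑ k ∈ (Finset.Icc 1 m).filter (fun k => ¬ H ∣ k), γ ^ (m + 1 - k)
      = γ * ∑ k ∈ (Finset.Icc 1 m).filter (fun k => ¬ H ∣ k), γ ^ (m - k) := by
    rw [Finset.mul_sum]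
    refine Finset.sum_congr rfl fun k hk => ?_
    simp only [Finset.mem_filter, Finset.mem_Icc] at hk
    have : m + 1 - k = (m - k) + 1 := by omega
    rw [this, pow_succ]; ring
  by_cases hd : H ∣ (m + 1)
  · simp [hd, hsum]
  · rw [if_pos hd, Finset.sum_insert (by simp), hsum, if_neg hd, Nat.sub_self, pow_zero]
    ring

set_option maxHeartbeats 1000000 in
theorem fedattn_error_bound_uniform
    (L d : ℕ) (hL : 0 < L) (hd : 0 < d)
    (H T N : ℕ) (hH : 1 ≤ H) (hT : 1 ≤ T) (hN : 1 ≤ N)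
    (A Ahat F : ℕ → Matrix (Fin L) (Fin d) ℝ → Matrix (Fin L) (Fin d) ℝ)
    (ρ θ : ℕ → ℝ) (σ : ℕ → ℕ → ℝ)
    (ρ0 θ0 : ℝ) (σbar : ℕ → ℝ) (hρ0 : 0 < ρ0) (hθ0 : 0 < θ0)
    (hρ : ∀ m ∈ Finset.Icc 1 (H * T), 0 < ρ m)
    (hθ : ∀ m ∈ Finset.Icc 1 (H * T), 0 < θ m)
    (hσ : ∀ m ∈ Finset.Icc 1 (H * T), ∀ n ∈ Finset.Icc 1 N, 0 ≤ σ m n)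
    (hρu : ∀ m ∈ Finset.Icc 1 (H * T), ρ m ≤ ρ0)
    (hθu : ∀ m ∈ Finset.Icc 1 (H * T), θ m ≤ θ0)
    (hσu : ∀ m ∈ Finset.Icc 1 (H * T), ∀ n ∈ Finset.Icc 1 N, σ m n ≤ σbar n)
    (hAhat : ∀ m ∈ Finset.Icc 1 (H * T), ∀ X Y, ‖Ahat m X - Ahat m Y‖ ≤ ρ m * ‖X - Y‖)
    (hF : ∀ m ∈ Finset.Icc 1 (H * T), ∀ X Y, ‖F m X - F m Y‖ ≤ θ m * ‖X - Y‖)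
    (hdev : ∀ m ∈ Finset.Icc 1 (H * T), ∀ X,
      ‖A m X - Ahat m X‖ ≤ ∑ n ∈ Finset.Icc 1 N, σ m n)
    (Xemb : Matrix (Fin L) (Fin d) ℝ)
    (Xfed Xcen : ℕ → Matrix (Fin L) (Fin d) ℝ)
    (hfed0 : Xfed 0 = Xemb) (hcen0 : Xcen 0 = Xemb)
    (hfedLocal : ∀ m < H * T, ¬ H ∣ (m + 1) →
      Xfed (m + 1) =
        Xfed m + A (m + 1) (Xfed m) + F (m + 1) (Xfed m + A (m + 1) (Xfed m)))
    (hfedGlobal : ∀ m < H * T, H ∣ (m + 1) →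
      Xfed (m + 1) =
        Xfed m + Ahat (m + 1) (Xfed m) + F (m + 1) (Xfed m + Ahat (m + 1) (Xfed m)))
    (hcen : ∀ m < H * T,
      Xcen (m + 1) =
        Xcen m + Ahat (m + 1) (Xcen m) + F (m + 1) (Xcen m + Ahat (m + 1) (Xcen m)))
    (γ : ℝ) (hγ : γ = (1 + θ0) * (1 + ρ0)) :
    ‖Xfed (H * T) - Xcen (H * T)‖ ≤
      ((1 + θ0) * ∑ n ∈ Finset.Icc 1 N, σbar n) *
        ((γ ^ (H * T) - 1) / (γ - 1)) * (1 - (γ - 1) / (γ ^ H - 1)) := by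
  have hM1 : 1 ≤ H * T := Nat.one_le_iff_ne_zero.mpr (by positivity)
  set Sb := ∑ n ∈ Finset.Icc 1 N, σbar n with hSbdef
  have h1M : (1 : ℕ) ∈ Finset.Icc 1 (H * T) := by
    simp only [Finset.mem_Icc]; exact ⟨le_refl 1, hM1⟩
  have hSb : 0 ≤ Sb :=
    Finset.sum_nonneg fun n hn => le_trans (hσ 1 h1M n hn) (hσu 1 h1M n hn)
  have hγ1 : 1 < γ := by rw [hγ]; nlinarith
  have hγ0 : (0 : ℝ) < γ := by linarith
  set δ := (1 + θ0) * Sb with hδdef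
  have hδ : 0 ≤ δ := mul_nonneg (by linarith) hSb
  have key : ∀ m, m ≤ H * T →
      ‖Xfed m - Xcen m‖ ≤
        δ * ∑ k ∈ (Finset.Icc 1 m).filter (fun k => ¬ H ∣ k), γ ^ (m - k) := by
    intro m
    induction m with
    | zero =>
      intro _
      simp [hfed0, hcen0]
    | succ m ih =>
      intro hm1
      have hmlt : m < H * T := hm1
      have hmem : m + 1 ∈ Finset.Icc 1 (H * T) := by
        simp only [Finset.mem_Icc]; omega
      have ihm := ih (le_of_lt hmlt)
      have hθm := hθ _ hmem
      have hθum := hθu _ hmem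
      have hρm := hρ _ hmem
      have hρum := hρu _ hmem
      have hnn : (0 : ℝ) ≤ ‖Xfed m - Xcen m‖ := norm_nonneg _
      have hstep : ‖Xfed (m + 1) - Xcen (m + 1)‖ ≤
          γ * ‖Xfed m - Xcen m‖ + (if H ∣ (m + 1) then 0 else δ) := by
        by_cases hdd : H ∣ (m + 1)
        · rw [if_pos hdd, add_zero, hfedGlobal m hmlt hdd, hcen m hmlt]
          set u := Xfed m with hu
          set v := Xcen m with hv
          set P := u + Ahat (m + 1) u with hP
          set Q := v + Ahat (m + 1) v with hQ
          have hXY : (P + F (m + 1) P) - (Q + F (m + 1) Q)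
              = (P - Q) + (F (m + 1) P - F (m + 1) Q) := by abel
          have hPQdec : P - Q = (u - v) + (Ahat (m + 1) u - Ahat (m + 1) v) := by
            rw [hP, hQ]; abel
          have h2 := hAhat _ hmem u v
          have hPQ : ‖P - Q‖ ≤ (1 + ρ (m + 1)) * ‖u - v‖ := by
            calc ‖P - Q‖ ≤ ‖u - v‖ + ‖Ahat (m + 1) u - Ahat (m + 1) v‖ := by
                  rw [hPQdec]; exact norm_add_le _ _
              _ ≤ (1 + ρ (m + 1)) * ‖u - v‖ := by linarith
          have hFPQ := hF _ hmem P Q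
          have hPQnn : (0 : ℝ) ≤ ‖P - Q‖ := norm_nonneg _
          calc ‖(P + F (m + 1) P) - (Q + F (m + 1) Q)‖
              ≤ ‖P - Q‖ + ‖F (m + 1) P - F (m + 1) Q‖ := by
                rw [hXY]; exact norm_add_le _ _
            _ ≤ γ * ‖u - v‖ := by
                rw [hγ]
                nlinarith [mul_le_mul_of_nonneg_left hPQ (by linarith : (0:ℝ) ≤ 1 + θ0),
                  mul_nonneg (by linarith : (0:ℝ) ≤ θ0 - θ (m + 1)) hPQnn,
                  mul_nonneg (mul_nonneg (by linarith : (0:ℝ) ≤ 1 + θ0)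
                    (by linarith : (0:ℝ) ≤ ρ0 - ρ (m + 1))) hnn]
        · rw [if_neg hdd, hfedLocal m hmlt hdd, hcen m hmlt]
          set u := Xfed m with hu
          set v := Xcen m with hv
          set P := u + A (m + 1) u with hP
          set Q := v + Ahat (m + 1) v with hQ
          have hXY : (P + F (m + 1) P) - (Q + F (m + 1) Q)
              = (P - Q) + (F (m + 1) P - F (m + 1) Q) := by abel
          have hPQdec : P - Q = ((u - v) + (A (m + 1) u - Ahat (m + 1) u))
              + (Ahat (m + 1) u - Ahat (m + 1) v) := by
            rw [hP, hQ]; abel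
          have h2 := hAhat _ hmem u v
          have hdevm := hdev _ hmem u
          have hσle : ∑ n ∈ Finset.Icc 1 N, σ (m + 1) n ≤ Sb :=
            Finset.sum_le_sum fun n hn => hσu _ hmem n hn
          have hPQ : ‖P - Q‖ ≤ (1 + ρ (m + 1)) * ‖u - v‖ + Sb := by
            calc ‖P - Q‖
                ≤ ‖(u - v) + (A (m + 1) u - Ahat (m + 1) u)‖
                    + ‖Ahat (m + 1) u - Ahat (m + 1) v‖ := by
                  rw [hPQdec]; exact norm_add_le _ _
              _ ≤ (‖u - v‖ + ‖A (m + 1) u - Ahat (m + 1) u‖)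
                    + ‖Ahat (m + 1) u - Ahat (m + 1) v‖ := by
                  have := norm_add_le (u - v) (A (m + 1) u - Ahat (m + 1) u)
                  linarith
              _ ≤ (1 + ρ (m + 1)) * ‖u - v‖ + Sb := by linarith
          have hFPQ := hF _ hmem P Q
          have hPQnn : (0 : ℝ) ≤ ‖P - Q‖ := norm_nonneg _
          calc ‖(P + F (m + 1) P) - (Q + F (m + 1) Q)‖
              ≤ ‖P - Q‖ + ‖F (m + 1) P - F (m + 1) Q‖ := by
                rw [hXY]; exact norm_add_le _ _
            _ ≤ γ * ‖u - v‖ + δ := by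
                rw [hγ, hδdef]
                nlinarith [mul_le_mul_of_nonneg_left hPQ (by linarith : (0:ℝ) ≤ 1 + θ0),
                  mul_nonneg (by linarith : (0:ℝ) ≤ θ0 - θ (m + 1)) hPQnn,
                  mul_nonneg (mul_nonneg (by linarith : (0:ℝ) ≤ 1 + θ0)
                    (by linarith : (0:ℝ) ≤ ρ0 - ρ (m + 1))) hnn]
      rw [fedattn_aux_Srec]
      have hif : δ * (γ * ∑ k ∈ (Finset.Icc 1 m).filter (fun k => ¬ H ∣ k), γ ^ (m - k)
            + (if H ∣ (m + 1) then (0:ℝ) else 1))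
          = γ * (δ * ∑ k ∈ (Finset.Icc 1 m).filter (fun k => ¬ H ∣ k), γ ^ (m - k))
            + (if H ∣ (m + 1) then 0 else δ) := by
        by_cases hdd : H ∣ (m + 1) <;> simp only [hdd, if_true, if_false] <;> ring
      rw [hif]
      have hmul := mul_le_mul_of_nonneg_left ihm (le_of_lt hγ0)
      linarith
  have hfin := key (H * T) le_rfl
  have hγne : γ ≠ 1 := ne_of_gt hγ1
  have hγH1 : 1 < γ ^ H := one_lt_pow₀ hγ1 (by omega)
  have hγHne : γ ^ H ≠ 1 := ne_of_gt hγH1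
  have hA : ∑ k ∈ Finset.Icc 1 (H * T), γ ^ (H * T - k) = (γ ^ (H * T) - 1) / (γ - 1) :=
    fedattn_aux_geomIcc γ hγne _
  have hC : ∑ k ∈ (Finset.Icc 1 (H * T)).filter (fun k => H ∣ k), γ ^ (H * T - k)
      = (γ ^ (H * T) - 1) / (γ ^ H - 1) := by
    rw [fedattn_aux_multIcc γ H T hH, fedattn_aux_geomIcc (γ ^ H) hγHne T, ← pow_mul]
  have hsplit := Finset.sum_filter_add_sum_filter_not (Finset.Icc 1 (H * T))
    (fun k => H ∣ k) (fun k => γ ^ (H * T - k))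
  have hS : ∑ k ∈ (Finset.Icc 1 (H * T)).filter (fun k => ¬ H ∣ k), γ ^ (H * T - k)
      = (γ ^ (H * T) - 1) / (γ - 1) - (γ ^ (H * T) - 1) / (γ ^ H - 1) := by
    rw [← hA, ← hC]; linarith [hsplit]
  rw [hS] at hfin
  refine le_trans hfin (le_of_eq ?_)
  have h1 : γ - 1 ≠ 0 := sub_ne_zero.mpr hγne
  have h2 : γ ^ H - 1 ≠ 0 := sub_ne_zero.mpr hγHne
  rw [hδdef]
  field_simp
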